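/- In the free associative algebra k⟨e, h, f⟩ modulo the two-sided ideal I generated by e·e, f·f, e·h + h·e, h·f + f·h, and e·f + f·e − h·h, the homogeneous component of degree p ≥ 2 has dimension exactly 4, spanned by the cosets of h^p, h^{p−1}e, f·h^{p−1}, and f·h^{p−2}·e. -/

import Mathlib

/-- The defining relations of `Ass^TKK(L(2))`: in `k⟨e,h,f⟩` (`e = ι 0`, `h = ι 1`,
`f = ι 2`) we impose `e·e = 0`, `f·f = 0`, `e·h + h·e = 0`, `h·f + f·h = 0`,
`e·f + f·e − h·h = 0`. -/
inductive AssTKKRel (k : Type*) [Field k] :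
    FreeAlgebra k (Fin 3) → FreeAlgebra k (Fin 3) → Prop
  | ee : AssTKKRel k (FreeAlgebra.ι k 0 * FreeAlgebra.ι k 0) 0
  | ff : AssTKKRel k (FreeAlgebra.ι k 2 * FreeAlgebra.ι k 2) 0
  | eh : AssTKKRel k (FreeAlgebra.ι k 0 * FreeAlgebra.ι k 1
      + FreeAlgebra.ι k 1 * FreeAlgebra.ι k 0) 0
  | hf : AssTKKRel k (FreeAlgebra.ι k 1 * FreeAlgebra.ι k 2
      + FreeAlgebra.ι k 2 * FreeAlgebra.ι k 1) 0
  | ef : AssTKKRel k (FreeAlgebra.ι k 0 * FreeAlgebra.ι k 2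
      + FreeAlgebra.ι k 2 * FreeAlgebra.ι k 0
      - FreeAlgebra.ι k 1 * FreeAlgebra.ι k 1) 0

/-! ### Generic reduction machinery over an arbitrary algebra -/

namespace AssTKKAux

variable {k : Type*} [Field k] {A : Type*} [Ring A] [Algebra k A]

/-- The normal-form monomials in degree `n`. -/
def Tset (E H F : A) : ℕ → Set A
  | 0 => {1}
  | 1 => {H, E, F}
  | (n+2) => {H^(n+2), H^(n+1)*E, F*H^(n+1), F*H^n*E}

section rels

variable (E H F : A)
variable (hEE : E*E = 0) (hFF : F*F = 0) (hEH : E*H = -(H*E))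
  (hHF : H*F = -(F*H)) (hEF : E*F = H*H - F*E)

include hEH in
theorem EHpow : ∀ b : ℕ, E * H ^ b = ((-1 : k) ^ b) • (H ^ b * E) := by
  intro b
  induction b with
  | zero => simp
  | succ n ih =>
    rw [pow_succ' H, ← mul_assoc, hEH, neg_mul, mul_assoc, ih, mul_smul_comm,
      ← neg_smul, ← mul_assoc, ← pow_succ']
    congr 1
    ring

include hEH hEF in
theorem EFHpow : ∀ b : ℕ, E * (F * H ^ b) = H ^ (b+2) - ((-1 : k) ^ b) • (F * H ^ b * E) := by
  intro b
  rw [← mul_assoc, hEF, sub_mul,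
    show H * H * H ^ b = H ^ (b+2) from by rw [mul_assoc, ← pow_succ', ← pow_succ'],
    mul_assoc F E, EHpow (k := k) E H hEH b, mul_smul_comm, ← mul_assoc]

open Submodule

include hEH in
theorem stepE (n : ℕ) (s : A) (hs : s ∈ Tset E H F n)
    (hEE : E*E = 0) (hEF : E*F = H*H - F*E) :
    E * s ∈ span k (Tset E H F (n+1)) := by
  match n with
  | 0 =>
    rw [Tset, Set.mem_singleton_iff] at hs
    rw [hs, mul_one]
    exact subset_span (by simp [Tset])
  | 1 =>
    simp only [Tset, Set.mem_insert_iff, Set.mem_singleton_iff] at hs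
    rcases hs with hs | hs | hs <;> rw [hs]
    · rw [hEH, show H * E = H^1 * E from by rw [pow_one]]
      exact neg_mem (subset_span (by simp [Tset]))
    · rw [hEE]; exact zero_mem _
    · rw [hEF, show H * H = H^2 from (sq H).symm,
        show F * E = F * H^0 * E from by rw [pow_zero, mul_one]]
      exact sub_mem (subset_span (by simp [Tset])) (subset_span (by simp [Tset]))
  | (m+2) =>
    simp only [Tset, Set.mem_insert_iff, Set.mem_singleton_iff] at hs
    rcases hs with hs | hs | hs | hs <;> rw [hs]
    · rw [EHpow (k := k) E H hEH (m+2)]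
      exact smul_mem _ _ (subset_span (by simp [Tset]))
    · rw [← mul_assoc, EHpow (k := k) E H hEH (m+1), smul_mul_assoc, mul_assoc, hEE,
        mul_zero]
      simp
    · rw [EFHpow (k := k) E H F hEH hEF (m+1)]
      exact sub_mem (subset_span (by simp [Tset]))
        (smul_mem _ _ (subset_span (by simp [Tset])))
    · rw [← mul_assoc, EFHpow (k := k) E H F hEH hEF m, sub_mul, smul_mul_assoc, mul_assoc,
        mul_assoc, hEE, mul_zero, mul_zero]
      simp only [smul_zero, sub_zero]
      exact subset_span (by simp [Tset])

include hHF in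
theorem stepH (n : ℕ) (s : A) (hs : s ∈ Tset E H F n) :
    H * s ∈ span k (Tset E H F (n+1)) := by
  match n with
  | 0 =>
    rw [Tset, Set.mem_singleton_iff] at hs
    rw [hs, mul_one]
    exact subset_span (by simp [Tset])
  | 1 =>
    simp only [Tset, Set.mem_insert_iff, Set.mem_singleton_iff] at hs
    rcases hs with hs | hs | hs <;> rw [hs]
    · rw [show H * H = H^2 from (sq H).symm]
      exact subset_span (by simp [Tset])
    · rw [show H * E = H^1 * E from by rw [pow_one]]
      exact subset_span (by simp [Tset])
    · rw [hHF, show F * H = F * H^1 from by rw [pow_one]]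
      exact neg_mem (subset_span (by simp [Tset]))
  | (m+2) =>
    simp only [Tset, Set.mem_insert_iff, Set.mem_singleton_iff] at hs
    rcases hs with hs | hs | hs | hs <;> rw [hs]
    · rw [← pow_succ']
      exact subset_span (by simp [Tset])
    · rw [← mul_assoc, ← pow_succ']
      exact subset_span (by simp [Tset])
    · rw [← mul_assoc, hHF, neg_mul, mul_assoc, ← pow_succ']
      exact neg_mem (subset_span (by simp [Tset]))
    · rw [← mul_assoc, ← mul_assoc, hHF, neg_mul, neg_mul, mul_assoc F H, ← pow_succ']
      exact neg_mem (subset_span (by simp [Tset]))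

include hFF in
theorem stepF (n : ℕ) (s : A) (hs : s ∈ Tset E H F n) :
    F * s ∈ span k (Tset E H F (n+1)) := by
  match n with
  | 0 =>
    rw [Tset, Set.mem_singleton_iff] at hs
    rw [hs, mul_one]
    exact subset_span (by simp [Tset])
  | 1 =>
    simp only [Tset, Set.mem_insert_iff, Set.mem_singleton_iff] at hs
    rcases hs with hs | hs | hs <;> rw [hs]
    · rw [show F * H = F * H^1 from by rw [pow_one]]
      exact subset_span (by simp [Tset])
    · rw [show F * E = F * H^0 * E from by rw [pow_zero, mul_one]]
      exact subset_span (by simp [Tset])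
    · rw [hFF]; exact zero_mem _
  | (m+2) =>
    simp only [Tset, Set.mem_insert_iff, Set.mem_singleton_iff] at hs
    rcases hs with hs | hs | hs | hs <;> rw [hs]
    · exact subset_span (by simp [Tset])
    · rw [← mul_assoc]
      exact subset_span (by simp [Tset])
    · rw [← mul_assoc, hFF, zero_mul]
      exact zero_mem _
    · rw [← mul_assoc, ← mul_assoc, hFF, zero_mul, zero_mul]
      exact zero_mem _

theorem mul_span (G : A) (S S' : Set A) (hstep : ∀ s ∈ S, G * s ∈ span k S') :
    ∀ x ∈ span k S, G * x ∈ span k S' := by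
  intro x hx
  induction hx using Submodule.span_induction with
  | mem s hs => exact hstep s hs
  | zero => rw [mul_zero]; exact zero_mem _
  | add a b _ _ ha hb => rw [mul_add]; exact add_mem ha hb
  | smul c a _ ha => rw [mul_smul_comm]; exact Submodule.smul_mem _ c ha

include hEE hFF hEH hHF hEF in
theorem word_mem : ∀ l : List (Fin 3),
    (l.map ![E,H,F]).prod ∈ span k (Tset E H F l.length) := by
  intro l
  induction l with
  | nil => exact subset_span (by simp [Tset])
  | cons i l ih =>
    rw [List.map_cons, List.prod_cons, List.length_cons]
    fin_cases i
    · exact mul_span E _ _ (fun s hs => stepE E H F hEH l.length s hs hEE hEF) _ ih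
    · exact mul_span H _ _ (fun s hs => stepH E H F hHF l.length s hs) _ ih
    · exact mul_span F _ _ (fun s hs => stepF E H F hFF l.length s hs) _ ih

end rels

/-! ### The matrix representation -/

variable (k)

noncomputable def rep0 : FreeAlgebra k (Fin 3) →ₐ[k] Matrix (Fin 2) (Fin 2) k :=
  FreeAlgebra.lift k ![!![0,1;0,0], !![1,0;0,-1], !![0,0;1,0]]

theorem rep0_rel : ∀ ⦃a b⦄, AssTKKRel k a b → rep0 k a = rep0 k b := by
  intro a b r
  cases r <;>
    simp only [rep0, map_mul, map_add, map_sub, map_zero, FreeAlgebra.lift_ι_apply,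
      Matrix.cons_val_zero, Matrix.cons_val_one, Matrix.head_cons, Matrix.cons_val_two,
      Matrix.tail_cons] <;>
    ext i j <;> fin_cases i <;> fin_cases j <;>
    simp [Matrix.mul_apply, Fin.sum_univ_two]

noncomputable def rep : RingQuot (AssTKKRel k) →ₐ[k] Matrix (Fin 2) (Fin 2) k :=
  RingQuot.liftAlgHom k ⟨rep0 k, rep0_rel k⟩

theorem rep_mk (x : FreeAlgebra k (Fin 3)) :
    rep k (RingQuot.mkAlgHom k (AssTKKRel k) x) = rep0 k x :=
  RingQuot.liftAlgHom_mkAlgHom_apply k _ _ x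

theorem Hm_pow : ∀ b : ℕ, (!![1,0;0,-1] : Matrix (Fin 2) (Fin 2) k) ^ b
    = !![1,0;0,(-1)^b] := by
  intro b
  induction b with
  | zero => simp [Matrix.one_fin_two]
  | succ n ih =>
    rw [pow_succ, ih]
    ext i j
    fin_cases i <;> fin_cases j <;> simp [Matrix.mul_apply, Fin.sum_univ_two, pow_succ]

theorem matLI (c : k) :
    LinearIndependent k
      (![!![1,0;0,c], !![0,1;0,0], !![0,0;1,0], !![0,0;0,1]] :
        Fin 4 → Matrix (Fin 2) (Fin 2) k) := by
  rw [Fintype.linearIndependent_iff]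
  intro g hg
  have h00 := congrFun (congrFun hg 0) 0
  have h01 := congrFun (congrFun hg 0) 1
  have h10 := congrFun (congrFun hg 1) 0
  have h11 := congrFun (congrFun hg 1) 1
  simp [Fin.sum_univ_four, Matrix.sum_apply] at h00 h01 h10 h11
  intro i
  fin_cases i <;> simp_all

end AssTKKAux

open AssTKKAux in
/-- In the quotient of `k⟨e,h,f⟩` by the two-sided ideal generated by the
relations above, the homogeneous component of degree `p ≥ 2` (the span of the images of all
words of length `p` in the generators) has dimension exactly `4`, spanned by the cosets of
`h^p`, `h^{p−1}e`, `f·h^{p−1}` and `f·h^{p−2}·e`. -/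
theorem assTKK_degree_component_dim_four
    (k : Type*) [Field k] [CharZero k]
    (π : FreeAlgebra k (Fin 3) →ₐ[k] RingQuot (AssTKKRel k))
    (hπ : π = RingQuot.mkAlgHom k (AssTKKRel k))
    (e h f : FreeAlgebra k (Fin 3))
    (he : e = FreeAlgebra.ι k 0) (hh : h = FreeAlgebra.ι k 1) (hf : f = FreeAlgebra.ι k 2) :
    ∀ p : ℕ, 2 ≤ p →
      (Submodule.span k (Set.range fun w : {l : List (Fin 3) // l.length = p} =>
          π ((w.1.map fun i => FreeAlgebra.ι k i).prod)) =
        Submodule.span k {π (h ^ p), π (h ^ (p - 1) * e), π (f * h ^ (p - 1)),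
          π (f * h ^ (p - 2) * e)}) ∧
      Module.finrank k (Submodule.span k (Set.range
          fun w : {l : List (Fin 3) // l.length = p} =>
            π ((w.1.map fun i => FreeAlgebra.ι k i).prod))) = 4 := by
  subst hπ he hh hf
  intro p hp
  obtain ⟨m, rfl⟩ : ∃ m, p = m + 2 := ⟨p - 2, by omega⟩
  set π := RingQuot.mkAlgHom k (AssTKKRel k) with hπ
  set E : RingQuot (AssTKKRel k) := π (FreeAlgebra.ι k 0) with hE
  set H : RingQuot (AssTKKRel k) := π (FreeAlgebra.ι k 1) with hH
  set F : RingQuot (AssTKKRel k) := π (FreeAlgebra.ι k 2) with hF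
  -- the relations in the quotient
  have hEE : E * E = 0 := by
    have := RingQuot.mkAlgHom_rel k (AssTKKRel.ee (k := k))
    simpa [map_mul] using this
  have hFF : F * F = 0 := by
    have := RingQuot.mkAlgHom_rel k (AssTKKRel.ff (k := k))
    simpa [map_mul] using this
  have hEH : E * H = -(H * E) := by
    have := RingQuot.mkAlgHom_rel k (AssTKKRel.eh (k := k))
    simp only [map_add, map_mul, map_zero] at this
    rw [eq_neg_iff_add_eq_zero]
    exact this
  have hHF : H * F = -(F * H) := by
    have := RingQuot.mkAlgHom_rel k (AssTKKRel.hf (k := k))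
    simp only [map_add, map_mul, map_zero] at this
    rw [eq_neg_iff_add_eq_zero]
    exact this
  have hEF : E * F = H * H - F * E := by
    have := RingQuot.mkAlgHom_rel k (AssTKKRel.ef (k := k))
    simp only [map_sub, map_add, map_mul, map_zero] at this
    have h2 : E * F + F * E - H * H = 0 := this
    linear_combination (norm := noncomm_ring) h2
  -- image of a word
  have hword : ∀ l : List (Fin 3),
      π ((l.map fun i => FreeAlgebra.ι k i).prod) = (l.map ![E,H,F]).prod := by
    intro l
    rw [map_list_prod, List.map_map]
    congr 1
    apply List.map_congr_left
    intro i _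
    fin_cases i <;> rfl
  -- the four target elements
  have hset : {π (FreeAlgebra.ι k 1 ^ (m+2)),
      π (FreeAlgebra.ι k 1 ^ (m+2-1) * FreeAlgebra.ι k 0),
      π (FreeAlgebra.ι k 2 * FreeAlgebra.ι k 1 ^ (m+2-1)),
      π (FreeAlgebra.ι k 2 * FreeAlgebra.ι k 1 ^ (m+2-2) * FreeAlgebra.ι k 0)}
      = Tset E H F (m+2) := by
    have h1 : m + 2 - 1 = m + 1 := by omega
    have h2 : m + 2 - 2 = m := by omega
    rw [h1, h2]
    simp only [Tset, map_mul, map_pow]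
    rfl
  -- span equality
  have hspan : Submodule.span k (Set.range fun w : {l : List (Fin 3) // l.length = m+2} =>
      π ((w.1.map fun i => FreeAlgebra.ι k i).prod)) = Submodule.span k (Tset E H F (m+2)) := by
    apply le_antisymm
    · rw [Submodule.span_le]
      rintro x ⟨w, rfl⟩
      simp only [SetLike.mem_coe]
      rw [hword]
      have := word_mem (k := k) E H F hEE hFF hEH hHF hEF w.1
      rwa [w.2] at this
    · rw [Submodule.span_le]
      intro x hx
      simp only [Tset, Set.mem_insert_iff, Set.mem_singleton_iff] at hx
      rcases hx with rfl | rfl | rfl | rfl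
      · apply Submodule.subset_span
        refine ⟨⟨List.replicate (m+2) 1, by simp⟩, ?_⟩
        simp [List.map_replicate, List.prod_replicate, map_pow]
        rfl
      · apply Submodule.subset_span
        refine ⟨⟨List.replicate (m+1) 1 ++ [0], by simp⟩, ?_⟩
        simp [List.map_replicate, List.prod_replicate, map_pow, map_mul]
        rfl
      · apply Submodule.subset_span
        refine ⟨⟨2 :: List.replicate (m+1) 1, by simp⟩, ?_⟩
        simp [List.map_replicate, List.prod_replicate, map_pow, map_mul]
        rfl
      · apply Submodule.subset_span
        refine ⟨⟨2 :: (List.replicate m 1 ++ [0]), by simp⟩, ?_⟩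
        simp [List.map_replicate, List.prod_replicate, map_pow, map_mul, mul_assoc]
        rfl
  constructor
  · rw [hspan, hset]
  · rw [hspan]
    -- linear independence of the four normal forms
    set v : Fin 4 → RingQuot (AssTKKRel k) :=
      ![H^(m+2), H^(m+1)*E, F*H^(m+1), F*H^m*E] with hv
    have hrange : Set.range v = Tset E H F (m+2) := by
      ext x
      simp only [hv, Set.mem_range, Tset, Set.mem_insert_iff, Set.mem_singleton_iff]
      constructor
      · rintro ⟨i, rfl⟩
        fin_cases i <;> simp
      · rintro (rfl | rfl | rfl | rfl)
        exacts [⟨0, rfl⟩, ⟨1, rfl⟩, ⟨2, rfl⟩, ⟨3, rfl⟩]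
    have hrepE : rep k E = !![0,1;0,0] := by
      rw [hE, rep_mk]; simp [rep0, FreeAlgebra.lift_ι_apply]
    have hrepH : rep k H = !![1,0;0,-1] := by
      rw [hH, rep_mk]; simp [rep0, FreeAlgebra.lift_ι_apply]
    have hrepF : rep k F = !![0,0;1,0] := by
      rw [hF, rep_mk]; simp [rep0, FreeAlgebra.lift_ι_apply]
    have hmul1 : (!![1,0;0,(-1)^(m+1)] : Matrix (Fin 2) (Fin 2) k) * !![0,1;0,0]
        = !![0,1;0,0] := by
      ext i j; fin_cases i <;> fin_cases j <;> simp [Matrix.mul_apply, Fin.sum_univ_two]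
    have hmul2 : (!![0,0;1,0] : Matrix (Fin 2) (Fin 2) k) * !![1,0;0,(-1)^(m+1)]
        = !![0,0;1,0] := by
      ext i j; fin_cases i <;> fin_cases j <;> simp [Matrix.mul_apply, Fin.sum_univ_two]
    have hmul3 : (!![0,0;1,0] : Matrix (Fin 2) (Fin 2) k) * !![1,0;0,(-1)^m]
        = !![0,0;1,0] := by
      ext i j; fin_cases i <;> fin_cases j <;> simp [Matrix.mul_apply, Fin.sum_univ_two]
    have hmul4 : (!![0,0;1,0] : Matrix (Fin 2) (Fin 2) k) * !![0,1;0,0]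
        = !![0,0;0,1] := by
      ext i j; fin_cases i <;> fin_cases j <;> simp [Matrix.mul_apply, Fin.sum_univ_two]
    have hc0 : rep k (H^(m+2)) = !![1,0;0,(-1)^(m+2)] := by
      rw [map_pow, hrepH, Hm_pow]
    have hc1 : rep k (H^(m+1)*E) = !![0,1;0,0] := by
      rw [map_mul, map_pow, hrepH, hrepE, Hm_pow, hmul1]
    have hc2 : rep k (F*H^(m+1)) = !![0,0;1,0] := by
      rw [map_mul, map_pow, hrepH, hrepF, Hm_pow, hmul2]
    have hc3 : rep k (F*H^m*E) = !![0,0;0,1] := by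
      rw [map_mul, map_mul, map_pow, hrepH, hrepE, hrepF, Hm_pow, hmul3, hmul4]
    have hLI : LinearIndependent k v := by
      apply LinearIndependent.of_comp (rep k).toLinearMap
      have hcomp : (rep k).toLinearMap ∘ v
          = ![!![1,0;0,(-1)^(m+2)], !![0,1;0,0], !![0,0;1,0], !![0,0;0,1]] := by
        funext i
        fin_cases i
        · exact hc0
        · exact hc1
        · exact hc2
        · exact hc3
      rw [hcomp]
      exact matLI k ((-1)^(m+2))
    rw [← hrange, finrank_span_eq_card hLI]
    rfl
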